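/- arXiv:0710.0012 — 2 statements merged into one kernel-verified Lean document; each statement's English description precedes it below -/
import Mathlib

section
/- Let F₁, F₂ be holomorphic functions on the strip S_{R₀} = {x+iy ∈ ℂ : |y| < R₀} that are periodic of period 1 (i.e., F_j(z+1)=F_j(z)), and let α : (−R₀, R₀) → ℝ be bounded and measurable. Then for all 0 < R < R₀/2, ∫₀¹ conj(F₁(x)) ∫_{−2R}^{2R} F₂(x+iy) α(y) dy dx = ∫₀¹ ∫_{−2R}^{2R} conj(F₁(x+iy/2)) F₂(x+iy/2) α(y) dy dx. -/
open Complex MeasureTheory Set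

private lemma conj_conj_hasDerivAt {f : ℂ → ℂ} {f' w : ℂ}
    (hf : HasDerivAt f f' ((starRingEnd ℂ) w)) :
    HasDerivAt (fun z => (starRingEnd ℂ) (f ((starRingEnd ℂ) z))) ((starRingEnd ℂ) f') w := by
  rw [hasDerivAt_iff_isLittleO] at hf ⊢
  have hc : Filter.Tendsto (starRingEnd ℂ) (nhds w) (nhds ((starRingEnd ℂ) w)) :=
    (Complex.continuous_conj.tendsto w)
  have h2 := hf.comp_tendsto hc
  have h3 : (fun z => (starRingEnd ℂ) (f ((starRingEnd ℂ) z)) -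
      (starRingEnd ℂ) (f ((starRingEnd ℂ) w)) - (z - w) • (starRingEnd ℂ) f')
      = fun z => (starRingEnd ℂ) (f ((starRingEnd ℂ) z) - f ((starRingEnd ℂ) w) -
          ((starRingEnd ℂ) z - (starRingEnd ℂ) w) • f') := by
    funext z; simp only [smul_eq_mul, map_sub, map_mul, RingHomCompTriple.comp_apply,
      RingHom.id_apply, Complex.conj_conj]
  rw [h3]
  have h4 := h2.norm_norm
  refine Asymptotics.IsLittleO.of_norm_norm ?_
  have h5 : (fun z => ‖(starRingEnd ℂ) (f ((starRingEnd ℂ) z) - f ((starRingEnd ℂ) w) -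
      ((starRingEnd ℂ) z - (starRingEnd ℂ) w) • f')‖)
      = fun z => ‖f ((starRingEnd ℂ) z) - f ((starRingEnd ℂ) w) -
          ((starRingEnd ℂ) z - (starRingEnd ℂ) w) • f'‖ := by
    funext z; rw [starRingEnd_apply, norm_star]
  rw [h5]
  have h6 : (fun z : ℂ => ‖z - w‖) = fun z => ‖(starRingEnd ℂ) z - (starRingEnd ℂ) w‖ := by
    funext z; rw [← map_sub, starRingEnd_apply, norm_star]
  rw [h6]
  exact h4

private lemma im_bounds {y t : ℝ} (ht : t ∈ uIcc (y/2) y) : |t| ≤ |y| ∧ |t - y| ≤ |y| := by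
  rw [Set.uIcc, Set.mem_Icc] at ht
  rcases le_total 0 y with hy0 | hy0
  · have h2 : y/2 ≤ y := by linarith
    rw [min_eq_left h2, max_eq_right h2] at ht
    rw [_root_.abs_of_nonneg hy0]
    constructor <;> rw [abs_le] <;> constructor <;> linarith
  · have h2 : y ≤ y/2 := by linarith
    rw [min_eq_right h2, max_eq_left h2] at ht
    rw [_root_.abs_of_nonpos hy0]
    constructor <;> rw [abs_le] <;> constructor <;> linarith

private lemma key_identity (R₀ : ℝ) (F₁ F₂ : ℂ → ℂ)
    (hF₁ : DifferentiableOn ℂ F₁ {z : ℂ | |z.im| < R₀})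
    (hF₂ : DifferentiableOn ℂ F₂ {z : ℂ | |z.im| < R₀})
    (hper₁ : ∀ z : ℂ, |z.im| < R₀ → F₁ (z + 1) = F₁ z)
    (hper₂ : ∀ z : ℂ, |z.im| < R₀ → F₂ (z + 1) = F₂ z)
    (y : ℝ) (hy : |y| < R₀) :
    (∫ x in (0:ℝ)..1, (starRingEnd ℂ) (F₁ (x : ℂ)) * F₂ ((x : ℂ) + (y : ℂ) * I))
      = ∫ x in (0:ℝ)..1, (starRingEnd ℂ) (F₁ ((x : ℂ) + (y : ℂ) * I / 2)) *
          F₂ ((x : ℂ) + (y : ℂ) * I / 2) := by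
  have hopen : IsOpen {z : ℂ | |z.im| < R₀} :=
    isOpen_lt (continuous_abs.comp Complex.continuous_im) continuous_const
  -- Ft is holomorphic on the strip
  set Ft : ℂ → ℂ := fun z => (starRingEnd ℂ) (F₁ ((starRingEnd ℂ) z)) with hFt_def
  have hFt : ∀ z : ℂ, |z.im| < R₀ → DifferentiableAt ℂ Ft z := by
    intro z hz
    have hz' : ((starRingEnd ℂ) z) ∈ {z : ℂ | |z.im| < R₀} := by
      simp only [mem_setOf_eq, Complex.conj_im, abs_neg]; exact hz
    have hd := (hF₁.differentiableAt (hopen.mem_nhds hz')).hasDerivAt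
    exact (conj_conj_hasDerivAt hd).differentiableAt
  set g : ℂ → ℂ := fun z => Ft (z - (y:ℂ) * I) * F₂ z with hg_def
  -- differentiability of g at points with |im| ≤ |y| (< R₀) and |im - y| ≤ |y|
  have hgdiff : ∀ z : ℂ, |z.im| ≤ |y| → |z.im - y| ≤ |y| → DifferentiableAt ℂ g z := by
    intro z h1 h2
    have hd1 : DifferentiableAt ℂ Ft (z - (y:ℂ) * I) := by
      apply hFt
      simp only [Complex.sub_im, Complex.mul_im, Complex.ofReal_re, Complex.I_im,
        Complex.ofReal_im, Complex.I_re, mul_zero, mul_one, zero_mul, add_zero]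
      exact lt_of_le_of_lt h2 hy
    have hd2 : DifferentiableAt ℂ F₂ z :=
      hF₂.differentiableAt (hopen.mem_nhds (by exact lt_of_le_of_lt h1 hy))
    exact ((hd1.comp z (differentiableAt_id.sub (differentiableAt_const _)))).mul hd2
  -- periodicity of g
  have hgper : ∀ z : ℂ, |z.im| ≤ |y| → |z.im - y| ≤ |y| → g (z + 1) = g z := by
    intro z h1 h2
    have e1 : z + 1 - (y:ℂ) * I = (z - (y:ℂ) * I) + 1 := by ring
    have him : |((starRingEnd ℂ) (z - (y:ℂ)*I)).im| < R₀ := by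
      simp only [Complex.conj_im, abs_neg, Complex.sub_im, Complex.mul_im, Complex.ofReal_re,
        Complex.I_im, Complex.ofReal_im, Complex.I_re, mul_zero, mul_one, zero_mul, add_zero]
      exact lt_of_le_of_lt h2 hy
    have e2 : Ft (z - (y:ℂ)*I + 1) = Ft (z - (y:ℂ)*I) := by
      simp only [hFt_def, map_add, map_one]
      rw [hper₁ _ him]
    simp only [hg_def, e1, e2, hper₂ z (lt_of_le_of_lt h1 hy)]
  -- rectangle
  have hrect := Complex.integral_boundary_rect_eq_zero_of_differentiableOn g
      ⟨0, y/2⟩ ⟨1, y⟩ (by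
    intro z hz
    rw [Complex.mem_reProdIm] at hz
    obtain ⟨h1, h2⟩ := im_bounds (t := z.im) (y := y) hz.2
    exact (hgdiff z h1 h2).differentiableWithinAt)
  simp only [Complex.ofReal_zero, Complex.ofReal_one] at hrect
  -- vertical sides cancel
  have hvert : (∫ t in (y/2)..y, g ((1:ℂ) + (t:ℂ) * I))
      = ∫ t in (y/2)..y, g ((0:ℂ) + (t:ℂ) * I) := by
    apply intervalIntegral.integral_congr
    intro t ht
    obtain ⟨h1, h2⟩ := im_bounds ht
    have him : ((t:ℂ) * I).im = t := by simp
    have := hgper ((t:ℂ) * I) (by rw [him]; exact h1) (by rw [him]; exact h2)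
    show g (1 + (t:ℂ) * I) = g (0 + (t:ℂ) * I)
    rw [add_comm (1:ℂ), this, zero_add]
  rw [hvert, add_sub_cancel_right] at hrect
  have heq : (∫ x in (0:ℝ)..1, g ((x:ℂ) + ((y/2 : ℝ):ℂ) * I))
      = ∫ x in (0:ℝ)..1, g ((x:ℂ) + (y:ℂ) * I) := sub_eq_zero.mp hrect
  -- now rewrite both sides
  have hB : (∫ x in (0:ℝ)..1, g ((x:ℂ) + (y:ℂ) * I))
      = ∫ x in (0:ℝ)..1, (starRingEnd ℂ) (F₁ (x : ℂ)) * F₂ ((x : ℂ) + (y : ℂ) * I) := by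
    apply intervalIntegral.integral_congr
    intro x _
    show Ft ((x:ℂ) + (y:ℂ)*I - (y:ℂ)*I) * F₂ ((x:ℂ) + (y:ℂ)*I) = _
    rw [add_sub_cancel_right]
    simp only [hFt_def, Complex.conj_ofReal]
  have hA : (∫ x in (0:ℝ)..1, g ((x:ℂ) + ((y/2 : ℝ):ℂ) * I))
      = ∫ x in (0:ℝ)..1, (starRingEnd ℂ) (F₁ ((x : ℂ) + (y : ℂ) * I / 2)) *
          F₂ ((x : ℂ) + (y : ℂ) * I / 2) := by
    apply intervalIntegral.integral_congr
    intro x _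
    show Ft ((x:ℂ) + ((y/2 : ℝ):ℂ)*I - (y:ℂ)*I) * F₂ ((x:ℂ) + ((y/2 : ℝ):ℂ)*I) = _
    have e1 : (x:ℂ) + ((y/2 : ℝ):ℂ)*I - (y:ℂ)*I = (starRingEnd ℂ) ((x:ℂ) + (y:ℂ)*I/2) := by
      simp only [map_add, map_div₀, map_mul, Complex.conj_ofReal, Complex.conj_I, map_ofNat]
      push_cast
      ring
    have e2 : (x:ℂ) + ((y/2 : ℝ):ℂ)*I = (x:ℂ) + (y:ℂ)*I/2 := by push_cast; ring
    rw [e1, e2]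
    simp only [hFt_def, Complex.conj_conj]
  rw [← hB, ← heq, hA]

private lemma integrable_aux (a : ℝ) (ha : 0 < a) (G : ℝ × ℝ → ℂ)
    (hG : ContinuousOn G (Icc (0:ℝ) 1 ×ˢ Icc (-a) a))
    (α : ℝ → ℝ) (hαm : Measurable α) (C : ℝ) (hαb : ∀ y, |α y| ≤ C) :
    Integrable (Function.uncurry fun x y => G (x, y) * (α y : ℂ))
      ((volume.restrict (Ioc (0:ℝ) 1)).prod (volume.restrict (Ioc (-a) a))) := by
  rw [Measure.prod_restrict]
  have hK : MeasurableSet (Icc (0:ℝ) 1 ×ˢ Icc (-a) a) :=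
    measurableSet_Icc.prod measurableSet_Icc
  obtain ⟨M, hM⟩ := (isCompact_Icc.prod isCompact_Icc).exists_bound_of_continuousOn hG
  have hMnn : 0 ≤ M := le_trans (norm_nonneg _)
    (hM (0, 0) ⟨⟨le_refl 0, zero_le_one⟩, ⟨neg_nonpos.mpr ha.le, ha.le⟩⟩)
  have hsub : (Ioc (0:ℝ) 1 ×ˢ Ioc (-a) a) ⊆ (Icc (0:ℝ) 1 ×ˢ Icc (-a) a) :=
    Set.prod_mono Ioc_subset_Icc_self Ioc_subset_Icc_self
  have hfun : (Function.uncurry fun x y => G (x, y) * (α y : ℂ))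
      = fun p : ℝ × ℝ => G p * (α p.2 : ℂ) := by
    funext p; simp [Function.uncurry]
  rw [hfun]
  have hint : IntegrableOn (fun p : ℝ × ℝ => G p * (α p.2 : ℂ))
      (Icc (0:ℝ) 1 ×ˢ Icc (-a) a) (volume.prod volume) := by
    constructor
    · exact (hG.aestronglyMeasurable hK).mul
        ((Complex.measurable_ofReal.comp (hαm.comp measurable_snd)).aestronglyMeasurable)
    · apply HasFiniteIntegral.restrict_of_bounded (C := M * C)
      · rw [← Measure.volume_eq_prod]
        exact (isCompact_Icc.prod isCompact_Icc).measure_lt_top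
      · filter_upwards [ae_restrict_mem hK] with p hp
        rw [norm_mul, Complex.norm_real, Real.norm_eq_abs]
        exact mul_le_mul (hM p hp) (hαb p.2) (abs_nonneg _) hMnn
  exact hint.mono_set hsub

/-- Prototype holomorphic change of variable on the circle `ℝ/ℤ`: if `F₁, F₂` are
holomorphic and `1`-periodic on the strip `S_{R₀} = {|Im z| < R₀}` and `α` is bounded
and measurable, then for all `0 < R < R₀/2`,
`∫₀¹ conj(F₁(x)) ∫_{−2R}^{2R} F₂(x+iy) α(y) dy dx
  = ∫₀¹ ∫_{−2R}^{2R} conj(F₁(x+iy/2)) F₂(x+iy/2) α(y) dy dx`. -/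
theorem circle_holomorphic_change_of_variable (R₀ : ℝ) (hR₀ : 0 < R₀)
    (F₁ F₂ : ℂ → ℂ)
    (hF₁ : DifferentiableOn ℂ F₁ {z : ℂ | |z.im| < R₀})
    (hF₂ : DifferentiableOn ℂ F₂ {z : ℂ | |z.im| < R₀})
    (hper₁ : ∀ z : ℂ, |z.im| < R₀ → F₁ (z + 1) = F₁ z)
    (hper₂ : ∀ z : ℂ, |z.im| < R₀ → F₂ (z + 1) = F₂ z)
    (α : ℝ → ℝ) (hαm : Measurable α) (hαb : ∃ C, ∀ y, |α y| ≤ C)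
    (R : ℝ) (hR : 0 < R) (hRR₀ : R < R₀ / 2) :
    (∫ x in (0 : ℝ)..1, (starRingEnd ℂ) (F₁ (x : ℂ)) *
        ∫ y in (-(2 * R))..(2 * R), F₂ ((x : ℂ) + (y : ℂ) * I) * (α y : ℂ))
      = ∫ x in (0 : ℝ)..1, ∫ y in (-(2 * R))..(2 * R),
          (starRingEnd ℂ) (F₁ ((x : ℂ) + (y : ℂ) * I / 2)) *
            F₂ ((x : ℂ) + (y : ℂ) * I / 2) * (α y : ℂ) := by
  obtain ⟨C, hC⟩ := hαb
  have ha : 0 < 2 * R := by linarith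
  have haR₀ : 2 * R < R₀ := by linarith
  have hle : -(2 * R) ≤ 2 * R := by linarith
  have hstrip : IsOpen {z : ℂ | |z.im| < R₀} :=
    isOpen_lt (continuous_abs.comp Complex.continuous_im) continuous_const
  have hcF₁ : ContinuousOn F₁ {z : ℂ | |z.im| < R₀} := hF₁.continuousOn
  have hcF₂ : ContinuousOn F₂ {z : ℂ | |z.im| < R₀} := hF₂.continuousOn
  set K : Set (ℝ × ℝ) := Icc (0:ℝ) 1 ×ˢ Icc (-(2*R)) (2*R) with hK_def
  have habsK : ∀ p : ℝ × ℝ, p ∈ K → |p.2| ≤ 2 * R := by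
    intro p hp
    have := hp.2
    rw [mem_Icc] at this
    exact abs_le.mpr ⟨by linarith [this.1], this.2⟩
  have hmaps1 : MapsTo (fun p : ℝ × ℝ => ((p.1 : ℂ))) K {z : ℂ | |z.im| < R₀} := by
    intro p _; simp only [mem_setOf_eq, Complex.ofReal_im, abs_zero]; exact hR₀
  have hmaps2 : MapsTo (fun p : ℝ × ℝ => ((p.1 : ℂ) + (p.2 : ℂ) * I)) K
      {z : ℂ | |z.im| < R₀} := by
    intro p hp
    have him : ((p.1 : ℂ) + (p.2 : ℂ) * I).im = p.2 := by simp
    simp only [mem_setOf_eq, him]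
    exact lt_of_le_of_lt (habsK p hp) haR₀
  have hmaps3 : MapsTo (fun p : ℝ × ℝ => ((p.1 : ℂ) + (p.2 : ℂ) * I / 2)) K
      {z : ℂ | |z.im| < R₀} := by
    intro p hp
    have he : (p.2 : ℂ) * I / 2 = ((p.2 / 2 : ℝ) : ℂ) * I := by push_cast; ring
    have him : ((p.1 : ℂ) + (p.2 : ℂ) * I / 2).im = p.2 / 2 := by rw [he]; simp
    simp only [mem_setOf_eq, him, abs_div]
    have := habsK p hp
    calc |p.2| / |(2:ℝ)| ≤ |p.2| := by
          rw [_root_.abs_two]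
          linarith [abs_nonneg p.2]
      _ < R₀ := lt_of_le_of_lt this haR₀
  have hcont₁ : ContinuousOn
      (fun p : ℝ × ℝ => (starRingEnd ℂ) (F₁ ((p.1 : ℂ))) * F₂ ((p.1 : ℂ) + (p.2 : ℂ) * I)) K := by
    apply ContinuousOn.mul
    · exact Complex.continuous_conj.comp_continuousOn
        (hcF₁.comp (Complex.continuous_ofReal.comp continuous_fst).continuousOn hmaps1)
    · exact hcF₂.comp ((Complex.continuous_ofReal.comp continuous_fst).add
        ((Complex.continuous_ofReal.comp continuous_snd).mul continuous_const)).continuousOn hmaps2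
  have hcont₂ : ContinuousOn
      (fun p : ℝ × ℝ => (starRingEnd ℂ) (F₁ ((p.1 : ℂ) + (p.2 : ℂ) * I / 2)) *
        F₂ ((p.1 : ℂ) + (p.2 : ℂ) * I / 2)) K := by
    have hc : Continuous (fun p : ℝ × ℝ => ((p.1 : ℂ) + (p.2 : ℂ) * I / 2)) :=
      (Complex.continuous_ofReal.comp continuous_fst).add
        (((Complex.continuous_ofReal.comp continuous_snd).mul continuous_const).div_const 2)
    apply ContinuousOn.mul
    · exact Complex.continuous_conj.comp_continuousOn
        (hcF₁.comp hc.continuousOn hmaps3)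
    · exact hcF₂.comp hc.continuousOn hmaps3
  have hint₁ := integrable_aux (2*R) ha
      (fun p : ℝ × ℝ => (starRingEnd ℂ) (F₁ ((p.1 : ℂ))) * F₂ ((p.1 : ℂ) + (p.2 : ℂ) * I))
      hcont₁ α hαm C hC
  have hint₂ := integrable_aux (2*R) ha
      (fun p : ℝ × ℝ => (starRingEnd ℂ) (F₁ ((p.1 : ℂ) + (p.2 : ℂ) * I / 2)) *
        F₂ ((p.1 : ℂ) + (p.2 : ℂ) * I / 2))
      hcont₂ α hαm C hC
  calc (∫ x in (0 : ℝ)..1, (starRingEnd ℂ) (F₁ (x : ℂ)) *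
        ∫ y in (-(2 * R))..(2 * R), F₂ ((x : ℂ) + (y : ℂ) * I) * (α y : ℂ))
      = ∫ x in (0 : ℝ)..1, ∫ y in (-(2 * R))..(2 * R),
          (starRingEnd ℂ) (F₁ (x : ℂ)) * F₂ ((x : ℂ) + (y : ℂ) * I) * (α y : ℂ) := by
        apply intervalIntegral.integral_congr
        intro x _
        beta_reduce
        rw [← intervalIntegral.integral_const_mul]
        apply intervalIntegral.integral_congr
        intro y _
        ring
    _ = ∫ x in Ioc (0 : ℝ) 1, ∫ y in Ioc (-(2 * R)) (2 * R),
          (starRingEnd ℂ) (F₁ (x : ℂ)) * F₂ ((x : ℂ) + (y : ℂ) * I) * (α y : ℂ) := by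
        rw [intervalIntegral.integral_of_le zero_le_one]
        apply setIntegral_congr_fun measurableSet_Ioc
        intro x _
        beta_reduce
        rw [intervalIntegral.integral_of_le hle]
    _ = ∫ y in Ioc (-(2 * R)) (2 * R), ∫ x in Ioc (0 : ℝ) 1,
          (starRingEnd ℂ) (F₁ (x : ℂ)) * F₂ ((x : ℂ) + (y : ℂ) * I) * (α y : ℂ) :=
        MeasureTheory.integral_integral_swap hint₁
    _ = ∫ y in Ioc (-(2 * R)) (2 * R), ∫ x in Ioc (0 : ℝ) 1,
          (starRingEnd ℂ) (F₁ ((x : ℂ) + (y : ℂ) * I / 2)) *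
            F₂ ((x : ℂ) + (y : ℂ) * I / 2) * (α y : ℂ) := by
        apply setIntegral_congr_fun measurableSet_Ioc
        intro y hy
        beta_reduce
        have hyR₀ : |y| < R₀ := by
          rw [mem_Ioc] at hy
          exact lt_of_le_of_lt (abs_le.mpr ⟨le_of_lt hy.1, hy.2⟩) haR₀
        calc (∫ x in Ioc (0 : ℝ) 1,
              (starRingEnd ℂ) (F₁ (x : ℂ)) * F₂ ((x : ℂ) + (y : ℂ) * I) * (α y : ℂ))
            = (∫ x in (0:ℝ)..1,
              (starRingEnd ℂ) (F₁ (x : ℂ)) * F₂ ((x : ℂ) + (y : ℂ) * I)) * (α y : ℂ) := by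
              rw [intervalIntegral.integral_of_le zero_le_one,
                ← integral_mul_const]
          _ = (∫ x in (0:ℝ)..1, (starRingEnd ℂ) (F₁ ((x : ℂ) + (y : ℂ) * I / 2)) *
              F₂ ((x : ℂ) + (y : ℂ) * I / 2)) * (α y : ℂ) := by
              rw [key_identity R₀ F₁ F₂ hF₁ hF₂ hper₁ hper₂ y hyR₀]
          _ = ∫ x in Ioc (0 : ℝ) 1, (starRingEnd ℂ) (F₁ ((x : ℂ) + (y : ℂ) * I / 2)) *
              F₂ ((x : ℂ) + (y : ℂ) * I / 2) * (α y : ℂ) := by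
              rw [intervalIntegral.integral_of_le zero_le_one, ← integral_mul_const]
    _ = ∫ x in Ioc (0 : ℝ) 1, ∫ y in Ioc (-(2 * R)) (2 * R),
          (starRingEnd ℂ) (F₁ ((x : ℂ) + (y : ℂ) * I / 2)) *
            F₂ ((x : ℂ) + (y : ℂ) * I / 2) * (α y : ℂ) :=
        (MeasureTheory.integral_integral_swap hint₂).symm
    _ = ∫ x in (0 : ℝ)..1, ∫ y in (-(2 * R))..(2 * R),
          (starRingEnd ℂ) (F₁ ((x : ℂ) + (y : ℂ) * I / 2)) *
            F₂ ((x : ℂ) + (y : ℂ) * I / 2) * (α y : ℂ) := by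
        rw [intervalIntegral.integral_of_le zero_le_one]
        apply setIntegral_congr_fun measurableSet_Ioc
        intro x _
        beta_reduce
        rw [intervalIntegral.integral_of_le hle]
end

section
/- Let H be a Hilbert space and (ψ_n) an orthonormal basis. Suppose (c_n) is a sequence of strictly positive reals, and let V ⊆ H be a Hilbert space continuously containing each ψ_n, with inner product satisfying ⟨F, ψ_n⟩_V = c_n ⟨rF, ψ_n⟩_H for every F ∈ V, where r : V → H is a bounded injective linear 'restriction' map. Then the ψ_n are mutually orthogonal in V, and if F ∈ V is orthogonal in V to every ψ_n, then F = 0; consequently the (normalized) ψ_n form an orthogonal basis of the closed span condition: their V-span is dense in V. -/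
/-- Abstract version of the lemma that the analytically continued eigenfunctions form
an orthogonal basis of the holomorphic `L²` space: if `(ψ_n)` is an orthonormal basis
of `H`, `r : V → H` is a bounded injective restriction map with `r ψVₙ = ψₙ`, `cₙ > 0`,
and `⟨F, ψVₙ⟩_V = cₙ ⟨rF, ψₙ⟩_H` for all `F ∈ V`, then the `ψVₙ` are mutually
orthogonal in `V`, any `F ∈ V` orthogonal to all of them vanishes, and their span is
dense in `V`. -/
theorem analytic_continuation_orthogonal_basis
    {H V : Type*} [NormedAddCommGroup H] [InnerProductSpace ℂ H] [CompleteSpace H]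
    [NormedAddCommGroup V] [InnerProductSpace ℂ V] [CompleteSpace V]
    (ψ : ℕ → H) (hψ : Orthonormal ℂ ψ)
    (htotal : (Submodule.span ℂ (Set.range ψ)).topologicalClosure = ⊤)
    (r : V →L[ℂ] H) (hr : Function.Injective r)
    (ψV : ℕ → V) (hrψ : ∀ n, r (ψV n) = ψ n)
    (c : ℕ → ℝ) (hc : ∀ n, 0 < c n)
    (hinner : ∀ (F : V) (n : ℕ), (inner ℂ F (ψV n) : ℂ) = (c n : ℂ) * (inner ℂ (r F) (ψ n) : ℂ)) :
    (∀ n m, n ≠ m → (inner ℂ (ψV n) (ψV m) : ℂ) = 0) ∧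
      (∀ F : V, (∀ n, (inner ℂ F (ψV n) : ℂ) = 0) → F = 0) ∧
      (Submodule.span ℂ (Set.range ψV)).topologicalClosure = ⊤ := by
  have hvanish : ∀ F : V, (∀ n, (inner ℂ F (ψV n) : ℂ) = 0) → F = 0 := by
    intro F hF
    have h0 : ∀ n, (inner ℂ (r F) (ψ n) : ℂ) = 0 := by
      intro n
      have := hinner F n
      rw [hF n] at this
      have hcne : (c n : ℂ) ≠ 0 := by
        exact_mod_cast (hc n).ne'
      rcases mul_eq_zero.mp this.symm with h | h
      · exact absurd h hcne
      · exact h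
    have hmem : r F ∈ (Submodule.span ℂ (Set.range ψ))ᗮ := by
      rw [Submodule.mem_orthogonal]
      intro u hu
      induction hu using Submodule.span_induction with
      | mem x hx =>
        obtain ⟨n, rfl⟩ := hx
        simpa using congrArg (starRingEnd ℂ) (h0 n)
      | zero => simp
      | add x y _ _ hx hy => rw [inner_add_left, hx, hy, add_zero]
      | smul a x _ hx => rw [inner_smul_left, hx, mul_zero]
    rw [Submodule.topologicalClosure_eq_top_iff.mp htotal, Submodule.mem_bot] at hmem
    exact hr (by simpa using hmem)
  refine ⟨?_, hvanish, ?_⟩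
  · intro n m hnm
    rw [hinner, hrψ, hψ.2 hnm, mul_zero]
  · rw [Submodule.topologicalClosure_eq_top_iff]
    rw [Submodule.eq_bot_iff]
    intro F hF
    refine hvanish F fun n => ?_
    have := (Submodule.mem_orthogonal _ F).mp hF (ψV n) (Submodule.subset_span ⟨n, rfl⟩)
    simpa using congrArg (starRingEnd ℂ) this
end
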